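/- Let (X,μ) and (Y,ν) be σ-finite measure spaces, S : L¹(Y) → L¹(X) a stochastic operator, and V a finite-dimensional subspace of L¹(Y). Then there exists a sequence (S_k) of stochastic integral operators from L¹(Y) to L¹(X) such that S_k f → S f in L¹ norm for every f ∈ V. -/

import Mathlib

open MeasureTheory Filter Set

section Aux

variable {X Y : Type*} [MeasurableSpace X] [MeasurableSpace Y]

lemma ae_finset_ball {α ι : Type*} {m : MeasurableSpace α} {μ' : Measure α} (s : Finset ι)
    {p : ι → α → Prop} (h : ∀ i ∈ s, ∀ᵐ x ∂μ', p i x) : ∀ᵐ x ∂μ', ∀ i ∈ s, p i x := by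
  have h2 : ∀ᵐ x ∂μ', ∀ i : {i // i ∈ s}, p i x := ae_all_iff.mpr fun i => h i i.2
  filter_upwards [h2] with x hx i hi
  exact hx ⟨i, hi⟩

/-- Coercion of a finite sum in `Lp`. -/
lemma lp_coeFn_finset_sum {α : Type*} {m : MeasurableSpace α} {μ' : Measure α}
    {ι : Type*} (s : Finset ι) (F : ι → Lp ℝ 1 μ') :
    ⇑(∑ i ∈ s, F i) =ᵐ[μ'] fun x => ∑ i ∈ s, F i x := by
  classical
  induction s using Finset.induction_on with
  | empty => simp only [Finset.sum_empty]; exact Lp.coeFn_zero ℝ 1 μ'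
  | @insert a s ha ih =>
    rw [Finset.sum_insert ha]
    filter_upwards [Lp.coeFn_add (F a) (∑ i ∈ s, F i), ih] with x h1 h2
    simp only [h1, Pi.add_apply, h2, Finset.sum_insert ha]

/-- A positive integral-preserving operator on L¹ is a contraction. -/
lemma stochastic_contraction (μ : Measure X) (ν : Measure Y)
    (S : Lp ℝ 1 ν →ₗ[ℝ] Lp ℝ 1 μ)
    (hSpos : ∀ u : Lp ℝ 1 ν, 0 ≤ u → 0 ≤ S u)
    (hSint : ∀ u : Lp ℝ 1 ν, ∫ x, S u x ∂μ = ∫ y, u y ∂ν)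
    (u : Lp ℝ 1 ν) : ‖S u‖ ≤ ‖u‖ := by
  set up := Lp.posPart u with hupdef
  set un := Lp.negPart u with hundef
  have hdecomp : u = up - un := by
    apply Lp.ext
    filter_upwards [Lp.coeFn_sub up un, Lp.coeFn_posPart u, Lp.coeFn_negPart u] with y h1 h2 h3
    rw [h1, Pi.sub_apply, h2, h3]
    simp only [sub_neg_eq_add, max_add_min, add_zero]
  have hupnn : (0 : Lp ℝ 1 ν) ≤ up := by
    rw [← Lp.coeFn_nonneg]
    filter_upwards [Lp.coeFn_posPart u] with y hy
    rw [hy]; exact le_max_right _ _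
  have hunnn : (0 : Lp ℝ 1 ν) ≤ un := by
    rw [← Lp.coeFn_nonneg]
    filter_upwards [Lp.coeFn_negPart u] with y hy
    rw [hy]
    exact neg_nonneg.mpr (min_le_right _ _)
  have hSup := hSpos up hupnn
  have hSun := hSpos un hunnn
  have habs : ∀ᵐ x ∂μ, ‖(S u) x‖ ≤ (S up) x + (S un) x := by
    have hsub : S u = S up - S un := by rw [hdecomp, map_sub]
    filter_upwards [hsub ▸ Lp.coeFn_sub (S up) (S un),
      (Lp.coeFn_nonneg (S up)).mpr hSup, (Lp.coeFn_nonneg (S un)).mpr hSun] with x h1 h2 h3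
    rw [h1, Pi.sub_apply, Real.norm_eq_abs]
    calc |(S up) x - (S un) x| ≤ |(S up) x| + |(S un) x| := abs_sub _ _
      _ = (S up) x + (S un) x := by rw [abs_of_nonneg h2, abs_of_nonneg h3]
  calc ‖S u‖ = ∫ x, ‖(S u) x‖ ∂μ := L1.norm_eq_integral_norm _
    _ ≤ ∫ x, ((S up) x + (S un) x) ∂μ := by
        refine integral_mono_ae ((L1.integrable_coeFn (S u)).norm) ?_ habs
        exact (L1.integrable_coeFn (S up)).add (L1.integrable_coeFn (S un))
    _ = (∫ x, (S up) x ∂μ) + ∫ x, (S un) x ∂μ :=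
        integral_add (L1.integrable_coeFn (S up)) (L1.integrable_coeFn (S un))
    _ = (∫ y, up y ∂ν) + ∫ y, un y ∂ν := by rw [hSint up, hSint un]
    _ = ∫ y, (up y + un y) ∂ν :=
        (integral_add (L1.integrable_coeFn up) (L1.integrable_coeFn un)).symm
    _ = ∫ y, ‖u y‖ ∂ν := by
        refine integral_congr_ae ?_
        filter_upwards [Lp.coeFn_posPart u, Lp.coeFn_negPart u] with y h2 h3
        rw [h2, h3, Real.norm_eq_abs]
        have h4 := max_sub_min_eq_abs (u y) (0 : ℝ)
        rw [zero_sub, abs_neg] at h4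
        linarith
    _ = ‖u‖ := (L1.norm_eq_integral_norm _).symm

/-- The key construction: given finitely many vectors, there is a stochastic integral
operator that is `ε`-close to `S` on all of them. -/
lemma stochastic_key (μ : Measure X) (ν : Measure Y)
    (S : Lp ℝ 1 ν →ₗ[ℝ] Lp ℝ 1 μ)
    (hS1 : ∀ u, ‖S u‖ ≤ ‖u‖)
    (hSpos : ∀ u : Lp ℝ 1 ν, 0 ≤ u → 0 ≤ S u)
    (hSint : ∀ u : Lp ℝ 1 ν, ∫ x, S u x ∂μ = ∫ y, u y ∂ν)
    (h : X → ℝ) (hhm : Measurable h) (hh0 : ∀ x, 0 ≤ h x) (hh1 : ∫ x, h x ∂μ = 1)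
    (H : Lp ℝ 1 μ) (hH : ⇑H =ᵐ[μ] h)
    {n : ℕ} (v : Fin n → Lp ℝ 1 ν) {ε : ℝ} (hε : 0 < ε) :
    ∃ T : Lp ℝ 1 ν →ₗ[ℝ] Lp ℝ 1 μ,
      (∃ K : X → Y → ℝ,
        Measurable (Function.uncurry K) ∧ (∀ x y, 0 ≤ K x y) ∧
        (∀ᵐ y ∂ν, ∫ x, K x y ∂μ = 1) ∧
        (∀ f : Lp ℝ 1 ν, (T f : X → ℝ) =ᵐ[μ] fun x => ∫ y, K x y * f y ∂ν)) ∧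
      ∀ i, ‖T (v i) - S (v i)‖ ≤ ε := by
  classical
  -- choose simple approximations of the vectors `v i`
  have hdense := Lp.simpleFunc.denseRange (E := ℝ) (μ := ν) (p := 1) (by norm_num)
  have happrox : ∀ i : Fin n, ∃ sfi : Lp.simpleFunc ℝ 1 ν,
      ‖v i - (sfi : Lp ℝ 1 ν)‖ < ε / 3 := by
    intro i
    obtain ⟨sfi, hsfi⟩ := Metric.denseRange_iff.mp hdense (v i) (ε / 3) (by linarith)
    exact ⟨sfi, by rwa [dist_eq_norm] at hsfi⟩
  choose sf hsf using happrox
  set σ : Fin n → SimpleFunc Y ℝ := fun i => Lp.simpleFunc.toSimpleFunc (sf i) with hσdef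
  have hσae : ∀ i, ⇑(σ i) =ᵐ[ν] ⇑((sf i : Lp ℝ 1 ν)) := fun i =>
    Lp.simpleFunc.toSimpleFunc_eq_toFun (sf i)
  have hσint : ∀ i, Integrable (σ i) ν := fun i =>
    (L1.integrable_coeFn ((sf i : Lp ℝ 1 ν))).congr (hσae i).symm
  -- the partition of Y into atoms
  set J : Finset (Fin n → ℝ) :=
    (Fintype.piFinset fun i => (σ i).range).filter (fun w => w ≠ 0) with hJdef
  set A : (Fin n → ℝ) → Set Y := fun w => ⋂ i, (σ i) ⁻¹' {w i} with hAdef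
  have hAmeas : ∀ w, MeasurableSet (A w) := fun w =>
    MeasurableSet.iInter fun i => (σ i).measurableSet_preimage _
  have hmemA : ∀ w y, y ∈ A w ↔ ∀ i, σ i y = w i := by
    intro w y; simp [hAdef]
  have hAfin : ∀ w ∈ J, ν (A w) < ⊤ := by
    intro w hw
    rcases Function.ne_iff.mp (Finset.mem_filter.mp hw).2 with ⟨i, hi⟩
    refine lt_of_le_of_lt (measure_mono ?_)
      ((σ i).measure_preimage_lt_top_of_integrable (hσint i) hi)
    intro y hy
    simpa using (hmemA w y).mp hy i
  have hAdisj : ∀ w₁ w₂ : Fin n → ℝ, w₁ ≠ w₂ → Disjoint (A w₁) (A w₂) := by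
    intro w₁ w₂ hne
    rw [Set.disjoint_left]
    intro y h1 h2
    refine hne (funext fun i => ?_)
    rw [← (hmemA w₁ y).mp h1 i, (hmemA w₂ y).mp h2 i]
  set B : Set Y := ⋃ w ∈ J, A w with hBdef
  have hBmeas : MeasurableSet B :=
    MeasurableSet.biUnion J.countable_toSet fun w _ => hAmeas w
  have hmemB : ∀ w ∈ J, ∀ y ∈ A w, y ∈ B := by
    intro w hw y hy
    exact Set.mem_biUnion hw hy
  have hclassify : ∀ y, y ∉ B → ∀ i, σ i y = 0 := by
    intro y hy i
    by_contra hne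
    have hw : (fun j => σ j y) ∈ J := by
      refine Finset.mem_filter.mpr
        ⟨Fintype.mem_piFinset.mpr fun j => SimpleFunc.mem_range_self _ y, ?_⟩
      intro h0
      exact hne (congrFun h0 i)
    exact hy (hmemB _ hw y ((hmemA _ y).mpr fun j => rfl))
  -- data attached to atoms
  set c : (Fin n → ℝ) → ℝ := fun w => (ν (A w)).toReal with hcdef
  have hc0 : ∀ w, 0 ≤ c w := fun w => ENNReal.toReal_nonneg
  set χ : (Fin n → ℝ) → Lp ℝ 1 ν := fun w =>
    if hw : ν (A w) ≠ ⊤ then indicatorConstLp 1 (hAmeas w) hw (1 : ℝ) else 0 with hχdef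
  have hχeq : ∀ w (hw : w ∈ J),
      χ w = indicatorConstLp 1 (hAmeas w) (hAfin w hw).ne (1 : ℝ) := by
    intro w hw
    simp only [hχdef]
    rw [dif_pos (hAfin w hw).ne]
  have hχcoe : ∀ w ∈ J, ⇑(χ w) =ᵐ[ν] (A w).indicator (fun _ => (1 : ℝ)) := by
    intro w hw
    rw [hχeq w hw]
    exact indicatorConstLp_coeFn
  have hχnonneg : ∀ w, (0 : Lp ℝ 1 ν) ≤ χ w := by
    intro w
    simp only [hχdef]
    split_ifs with hw
    · rw [← Lp.coeFn_nonneg]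
      filter_upwards [indicatorConstLp_coeFn (p := 1) (hs := hAmeas w) (hμs := hw)
        (c := (1 : ℝ))] with y hy
      rw [hy]
      exact Set.indicator_nonneg (fun _ _ => zero_le_one) y
    · exact le_refl 0
  have hχint : ∀ w ∈ J, ∫ y, χ w y ∂ν = c w := by
    intro w hw
    rw [hχeq w hw, integral_indicatorConstLp (hAmeas w) (hAfin w hw).ne (1 : ℝ)]
    simp [hcdef, measureReal_def]
  have hχnorm : ∀ w ∈ J, ‖χ w‖ = c w := by
    intro w hw
    rw [hχeq w hw, norm_indicatorConstLp one_ne_zero ENNReal.one_ne_top]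
    simp [hcdef, measureReal_def]
  set G : (Fin n → ℝ) → Lp ℝ 1 μ := fun w => S (χ w) with hGdef
  have hGnonneg : ∀ w, (0 : Lp ℝ 1 μ) ≤ G w := fun w => hSpos _ (hχnonneg w)
  set g : (Fin n → ℝ) → X → ℝ := fun w x => max (G w x) 0 with hgdef
  have hgmeas : ∀ w, Measurable (g w) := fun w =>
    (Lp.stronglyMeasurable (G w)).measurable.max measurable_const
  have hg0 : ∀ w x, 0 ≤ g w x := fun w x => le_max_right _ _
  have hgae : ∀ w, g w =ᵐ[μ] ⇑(G w) := by
    intro w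
    filter_upwards [(Lp.coeFn_nonneg (G w)).mpr (hGnonneg w)] with x hx
    simp only [hgdef]
    exact max_eq_left hx
  have hgint : ∀ w ∈ J, ∫ x, g w x ∂μ = c w := by
    intro w hw
    rw [integral_congr_ae (hgae w)]
    show ∫ x, (S (χ w)) x ∂μ = c w
    rw [hSint (χ w), hχint w hw]
  -- integral functionals
  set I : (Fin n → ℝ) → Lp ℝ 1 ν → ℝ := fun w f => ∫ y in A w, f y ∂ν with hIdef
  set IB : Lp ℝ 1 ν → ℝ := fun f => ∫ y in Bᶜ, f y ∂ν with hIBdef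
  have hsetadd : ∀ (s : Set Y), MeasurableSet s → ∀ f₁ f₂ : Lp ℝ 1 ν,
      ∫ y in s, (f₁ + f₂) y ∂ν = (∫ y in s, f₁ y ∂ν) + ∫ y in s, f₂ y ∂ν := by
    intro s hs f₁ f₂
    rw [setIntegral_congr_ae hs ((Lp.coeFn_add f₁ f₂).mono fun y hy _ => hy)]
    exact integral_add ((L1.integrable_coeFn f₁).integrableOn)
      ((L1.integrable_coeFn f₂).integrableOn)
  have hsetsmul : ∀ (s : Set Y), MeasurableSet s → ∀ (r : ℝ) (f : Lp ℝ 1 ν),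
      ∫ y in s, (r • f) y ∂ν = r * ∫ y in s, f y ∂ν := by
    intro s hs r f
    rw [setIntegral_congr_ae hs ((Lp.coeFn_smul r f).mono fun y hy _ => hy)]
    simpa using integral_smul (μ := ν.restrict s) r (⇑f)
  have hsetsub : ∀ (s : Set Y), MeasurableSet s → ∀ f₁ f₂ : Lp ℝ 1 ν,
      ∫ y in s, (f₁ - f₂) y ∂ν = (∫ y in s, f₁ y ∂ν) - ∫ y in s, f₂ y ∂ν := by
    intro s hs f₁ f₂
    rw [setIntegral_congr_ae hs ((Lp.coeFn_sub f₁ f₂).mono fun y hy _ => hy)]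
    exact integral_sub ((L1.integrable_coeFn f₁).integrableOn)
      ((L1.integrable_coeFn f₂).integrableOn)
  -- the operator
  set Tfun : Lp ℝ 1 ν → Lp ℝ 1 μ := fun f =>
    (∑ w ∈ J, ((c w)⁻¹ * I w f) • G w) + (IB f) • H with hTdef
  have hTadd : ∀ f₁ f₂, Tfun (f₁ + f₂) = Tfun f₁ + Tfun f₂ := by
    intro f₁ f₂
    have h1 : ∀ w, I w (f₁ + f₂) = I w f₁ + I w f₂ := fun w => hsetadd _ (hAmeas w) f₁ f₂
    have h2 : IB (f₁ + f₂) = IB f₁ + IB f₂ := hsetadd _ hBmeas.compl f₁ f₂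
    simp only [hTdef, h1, h2, mul_add, add_smul, Finset.sum_add_distrib]
    abel
  have hTsmul : ∀ (r : ℝ) (f : Lp ℝ 1 ν), Tfun (r • f) = r • Tfun f := by
    intro r f
    have h1 : ∀ w, I w (r • f) = r * I w f := fun w => hsetsmul _ (hAmeas w) r f
    have h2 : IB (r • f) = r * IB f := hsetsmul _ hBmeas.compl r f
    simp only [hTdef, h1, h2, smul_add, Finset.smul_sum, smul_smul]
    congr 1
    refine Finset.sum_congr rfl fun w _ => ?_
    congr 1
    ring
  -- the kernel
  set K : X → Y → ℝ := fun x y =>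
    (∑ w ∈ J, (c w)⁻¹ * (A w).indicator (fun _ => (1 : ℝ)) y * g w x)
      + (Bᶜ).indicator (fun _ => (1 : ℝ)) y * h x with hKdef
  have hKmeas : Measurable (Function.uncurry K) := by
    have : Function.uncurry K = fun p : X × Y =>
        (∑ w ∈ J, (c w)⁻¹ * (A w).indicator (fun _ => (1 : ℝ)) p.2 * g w p.1)
          + (Bᶜ).indicator (fun _ => (1 : ℝ)) p.2 * h p.1 := rfl
    rw [this]
    refine Measurable.add ?_ ?_
    · refine Finset.measurable_sum J fun w _ => ?_
      exact (((measurable_const.indicator (hAmeas w)).comp measurable_snd).const_mul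
        ((c w)⁻¹)).mul ((hgmeas w).comp measurable_fst)
    · exact ((measurable_const.indicator hBmeas.compl).comp measurable_snd).mul
        (hhm.comp measurable_fst)
  have hK0 : ∀ x y, 0 ≤ K x y := by
    intro x y
    refine add_nonneg (Finset.sum_nonneg fun w _ => ?_) ?_
    · exact mul_nonneg (mul_nonneg (inv_nonneg.mpr (hc0 w))
        (Set.indicator_nonneg (fun _ _ => zero_le_one) y)) (hg0 w x)
    · exact mul_nonneg (Set.indicator_nonneg (fun _ _ => zero_le_one) y) (hh0 x)
  -- a.e. goodness of atoms
  have hgood : ∀ᵐ y ∂ν, ∀ w ∈ J, ν (A w) = 0 → y ∉ A w := by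
    refine ae_finset_ball J fun w hw => ?_
    by_cases h0 : ν (A w) = 0
    · filter_upwards [measure_eq_zero_iff_ae_notMem.mp h0] with y hy
      exact fun _ => hy
    · filter_upwards with y h0'
      exact absurd h0' h0
  have hKcol : ∀ᵐ y ∂ν, ∫ x, K x y ∂μ = 1 := by
    filter_upwards [hgood] with y hy
    by_cases hyB : y ∈ B
    · obtain ⟨w₀, hw₀J, hw₀⟩ : ∃ w ∈ J, y ∈ A w := by
        simpa [hBdef] using hyB
      have hynB : y ∉ Bᶜ := fun hc => hc (hmemB w₀ hw₀J y hw₀)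
      have hKy : ∀ x, K x y = (c w₀)⁻¹ * g w₀ x := by
        intro x
        simp only [hKdef]
        rw [Set.indicator_of_notMem hynB,
          Finset.sum_eq_single_of_mem w₀ hw₀J (fun w hw hne => by
            rw [Set.indicator_of_notMem (Set.disjoint_right.mp (hAdisj w w₀ hne) hw₀)]
            ring), Set.indicator_of_mem hw₀]
        ring
      have hc₀ : c w₀ ≠ 0 := by
        simp only [hcdef]
        refine ENNReal.toReal_ne_zero.mpr ⟨fun h0 => (hy w₀ hw₀J h0) hw₀, (hAfin w₀ hw₀J).ne⟩
      calc ∫ x, K x y ∂μ = ∫ x, (c w₀)⁻¹ * g w₀ x ∂μ := by simp only [hKy]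
        _ = (c w₀)⁻¹ * ∫ x, g w₀ x ∂μ := integral_const_mul _ _
        _ = (c w₀)⁻¹ * c w₀ := by rw [hgint w₀ hw₀J]
        _ = 1 := inv_mul_cancel₀ hc₀
    · have hKy : ∀ x, K x y = h x := by
        intro x
        simp only [hKdef]
        rw [Finset.sum_eq_zero fun w hw => by
            rw [Set.indicator_of_notMem fun hyA => hyB (hmemB w hw y hyA)]
            ring,
          Set.indicator_of_mem (Set.mem_compl hyB)]
        ring
      simp only [hKy]
      exact hh1
  -- kernel representation
  have hrep : ∀ f : Lp ℝ 1 ν, ⇑(Tfun f) =ᵐ[μ] fun x => ∫ y, K x y * f y ∂ν := by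
    intro f
    have hint : Integrable (⇑f) ν := L1.integrable_coeFn f
    have hRHS : ∀ x, ∫ y, K x y * f y ∂ν
        = (∑ w ∈ J, (c w)⁻¹ * I w f * g w x) + IB f * h x := by
      intro x
      have hptw : (fun y => K x y * f y)
          = fun y => (∑ w ∈ J, ((c w)⁻¹ * g w x) * (A w).indicator (⇑f) y)
            + h x * (Bᶜ).indicator (⇑f) y := by
        funext y
        simp only [hKdef]
        rw [add_mul, Finset.sum_mul]
        congr 1
        · refine Finset.sum_congr rfl fun w _ => ?_
          by_cases hyA : y ∈ A w
          · rw [Set.indicator_of_mem hyA, Set.indicator_of_mem hyA]; ring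
          · rw [Set.indicator_of_notMem hyA, Set.indicator_of_notMem hyA]; ring
        · by_cases hyB : y ∈ Bᶜ
          · rw [Set.indicator_of_mem hyB, Set.indicator_of_mem hyB]; ring
          · rw [Set.indicator_of_notMem hyB, Set.indicator_of_notMem hyB]; ring
      rw [hptw, integral_add (integrable_finset_sum J fun w _ =>
          (hint.indicator (hAmeas w)).const_mul _)
        ((hint.indicator hBmeas.compl).const_mul _),
        integral_finset_sum J fun w _ => (hint.indicator (hAmeas w)).const_mul _]
      congr 1
      · refine Finset.sum_congr rfl fun w _ => ?_
        rw [integral_const_mul, integral_indicator (hAmeas w)]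
        simp only [hIdef]
        ring
      · rw [integral_const_mul, integral_indicator hBmeas.compl]
        simp only [hIBdef]
        ring
    have hsmul_all : ∀ᵐ x ∂μ, ∀ w ∈ J,
        ((((c w)⁻¹ * I w f) • G w : Lp ℝ 1 μ)) x = ((c w)⁻¹ * I w f) * G w x := by
      refine ae_finset_ball J fun w hw => ?_
      filter_upwards [Lp.coeFn_smul ((c w)⁻¹ * I w f) (G w)] with x hx
      rw [hx]
      rfl
    have hgall : ∀ᵐ x ∂μ, ∀ w ∈ J, g w x = G w x := by
      refine ae_finset_ball J fun w hw => ?_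
      filter_upwards [hgae w] with x hx
      exact hx
    filter_upwards [Lp.coeFn_add (∑ w ∈ J, ((c w)⁻¹ * I w f) • G w) ((IB f) • H),
      lp_coeFn_finset_sum J (fun w => ((c w)⁻¹ * I w f) • G w),
      Lp.coeFn_smul (IB f) H, hsmul_all, hgall, hH] with x hadd hsum hsm hall hgx hHx
    show (Tfun f) x = ∫ y, K x y * f y ∂ν
    have hTfx : (Tfun f) x
        = (∑ w ∈ J, ((c w)⁻¹ * I w f) * G w x) + IB f * H x := by
      simp only [hTdef]
      rw [hadd]
      simp only [Pi.add_apply]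
      rw [hsum, hsm]
      have hs2 : ∑ w ∈ J, ((((c w)⁻¹ * I w f) • G w : Lp ℝ 1 μ)) x
          = ∑ w ∈ J, ((c w)⁻¹ * I w f) * G w x :=
        Finset.sum_congr rfl fun w hw => hall w hw
      rw [hs2]
      rfl
    rw [hTfx, hRHS x, hHx]
    congr 1
    exact Finset.sum_congr rfl fun w hw => by rw [hgx w hw]
  -- the conditional-expectation-like operator
  set E : Lp ℝ 1 ν → Lp ℝ 1 ν := fun f => ∑ w ∈ J, ((c w)⁻¹ * I w f) • χ w with hEdef
  have hTE : ∀ f, Tfun f = S (E f) + (IB f) • H := by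
    intro f
    simp only [hTdef, hEdef, hGdef, map_sum, _root_.map_smul]
  have hEsub : ∀ f₁ f₂, E (f₁ - f₂) = E f₁ - E f₂ := by
    intro f₁ f₂
    have h1 : ∀ w, I w (f₁ - f₂) = I w f₁ - I w f₂ := fun w => hsetsub _ (hAmeas w) f₁ f₂
    simp only [hEdef, h1, mul_sub, sub_smul, Finset.sum_sub_distrib]
  have hnormE : ∀ f, ‖E f‖ ≤ ‖f‖ := by
    intro f
    have hint : Integrable (⇑f) ν := L1.integrable_coeFn f
    calc ‖E f‖ ≤ ∑ w ∈ J, ‖((c w)⁻¹ * I w f) • χ w‖ := norm_sum_le _ _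
      _ ≤ ∑ w ∈ J, ∫ y in A w, ‖f y‖ ∂ν := by
          refine Finset.sum_le_sum fun w hw => ?_
          rw [norm_smul, Real.norm_eq_abs, hχnorm w hw]
          rcases eq_or_ne (c w) 0 with h0 | h0
          · rw [h0, mul_zero]
            exact integral_nonneg fun y => norm_nonneg _
          · have : |(c w)⁻¹ * I w f| * c w = |I w f| := by
              rw [abs_mul, abs_inv, abs_of_nonneg (hc0 w)]
              field_simp
            rw [this]
            simpa only [hIdef, Real.norm_eq_abs] using
              norm_integral_le_integral_norm (μ := ν.restrict (A w)) (⇑f)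
      _ = ∫ y in ⋃ w ∈ J, A w, ‖f y‖ ∂ν := by
          refine (integral_biUnion_finset J (fun w _ => hAmeas w)
            (fun w₁ _ w₂ _ hne => hAdisj w₁ w₂ hne) fun w _ => hint.norm.integrableOn).symm
      _ ≤ ∫ y, ‖f y‖ ∂ν := by
          refine setIntegral_le_integral hint.norm ?_
          exact Eventually.of_forall fun y => norm_nonneg _
      _ = ‖f‖ := (L1.norm_eq_integral_norm _).symm
  have hEsf : ∀ i, E ((sf i : Lp ℝ 1 ν)) = (sf i : Lp ℝ 1 ν) := by
    intro i
    apply Lp.ext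
    have hχall : ∀ᵐ y ∂ν, ∀ w ∈ J,
        ((((c w)⁻¹ * I w (sf i : Lp ℝ 1 ν)) • χ w : Lp ℝ 1 ν)) y
          = ((c w)⁻¹ * I w (sf i : Lp ℝ 1 ν)) * (A w).indicator (fun _ => (1 : ℝ)) y := by
      refine ae_finset_ball J fun w hw => ?_
      filter_upwards [Lp.coeFn_smul ((c w)⁻¹ * I w (sf i : Lp ℝ 1 ν)) (χ w),
        hχcoe w hw] with y h1 h2
      rw [h1, Pi.smul_apply, h2]
      rfl
    filter_upwards [lp_coeFn_finset_sum J
        (fun w => ((c w)⁻¹ * I w (sf i : Lp ℝ 1 ν)) • χ w),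
      hχall, hgood, hσae i] with y hsum hall hy hσy
    show (E (sf i : Lp ℝ 1 ν)) y = (sf i : Lp ℝ 1 ν) y
    have hEy : (E (sf i : Lp ℝ 1 ν)) y
        = ∑ w ∈ J, ((c w)⁻¹ * I w (sf i : Lp ℝ 1 ν)) * (A w).indicator (fun _ => (1 : ℝ)) y := by
      simp only [hEdef]
      rw [hsum]
      exact Finset.sum_congr rfl fun w hw => hall w hw
    rw [hEy, ← hσy]
    set w₀ : Fin n → ℝ := fun j => σ j y with hw₀def
    by_cases h0 : w₀ = 0
    · rw [Finset.sum_eq_zero]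
      · show (0 : ℝ) = σ i y
        have : σ i y = w₀ i := rfl
        rw [this, h0]
        rfl
      · intro w hw
        have hynA : y ∉ A w := by
          intro hyA
          have : w = w₀ := funext fun j => ((hmemA w y).mp hyA j).symm
          exact (Finset.mem_filter.mp hw).2 (this.trans h0)
        rw [Set.indicator_of_notMem hynA]
        ring
    · have hw₀J : w₀ ∈ J := by
        refine Finset.mem_filter.mpr
          ⟨Fintype.mem_piFinset.mpr fun j => SimpleFunc.mem_range_self _ y, h0⟩
      have hyA₀ : y ∈ A w₀ := (hmemA w₀ y).mpr fun j => rfl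
      have hc₀ : c w₀ ≠ 0 := by
        simp only [hcdef]
        exact ENNReal.toReal_ne_zero.mpr
          ⟨fun hz => (hy w₀ hw₀J hz) hyA₀, (hAfin w₀ hw₀J).ne⟩
      have hIval : I w₀ (sf i : Lp ℝ 1 ν) = c w₀ * w₀ i := by
        simp only [hIdef]
        rw [setIntegral_congr_ae (hAmeas w₀) ((hσae i).symm.mono fun z hz _ => hz)]
        rw [setIntegral_congr_fun (hAmeas w₀)
          (fun z hz => (hmemA w₀ z).mp hz i : EqOn (⇑(σ i)) (fun _ => w₀ i) (A w₀))]
        rw [setIntegral_const]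
        simp only [hcdef, smul_eq_mul, measureReal_def]
      rw [Finset.sum_eq_single_of_mem w₀ hw₀J (fun w hw hne => by
        rw [Set.indicator_of_notMem (Set.disjoint_right.mp (hAdisj w w₀ hne) hyA₀)]
        ring)]
      rw [Set.indicator_of_mem hyA₀, hIval]
      show (c w₀)⁻¹ * (c w₀ * w₀ i) * 1 = σ i y
      field_simp
      rfl
  have hIBsf : ∀ i, IB ((sf i : Lp ℝ 1 ν)) = 0 := by
    intro i
    simp only [hIBdef]
    rw [setIntegral_congr_ae hBmeas.compl ((hσae i).symm.mono fun y hy _ => hy)]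
    rw [setIntegral_congr_fun hBmeas.compl
      (fun y hy => hclassify y hy i : EqOn (⇑(σ i)) (fun _ => (0 : ℝ)) Bᶜ)]
    simp
  have hHnorm : ‖H‖ = 1 := by
    rw [L1.norm_eq_integral_norm]
    rw [integral_congr_ae (hH.mono fun x hx => by
      rw [hx, Real.norm_eq_abs, abs_of_nonneg (hh0 x)])]
    exact hh1
  -- conclusion
  refine ⟨{ toFun := Tfun, map_add' := hTadd, map_smul' := hTsmul },
    ⟨K, hKmeas, hK0, hKcol, fun f => hrep f⟩, ?_⟩
  intro i
  show ‖Tfun (v i) - S (v i)‖ ≤ ε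
  set u := v i with hudef
  set s : Lp ℝ 1 ν := (sf i : Lp ℝ 1 ν) with hsdef
  have hdist : ‖u - s‖ < ε / 3 := hsf i
  have key1 : Tfun u - S u = S (E u - u) + (IB u) • H := by
    rw [hTE u, map_sub]
    abel
  have hEu : ‖E u - u‖ ≤ 2 * ‖u - s‖ := by
    have hdec : E u - u = E (u - s) + (s - u) := by
      rw [hEsub u s, hEsf i]
      abel
    calc ‖E u - u‖ = ‖E (u - s) + (s - u)‖ := by rw [hdec]
      _ ≤ ‖E (u - s)‖ + ‖s - u‖ := norm_add_le _ _
      _ ≤ ‖u - s‖ + ‖u - s‖ := by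
          refine add_le_add (hnormE _) ?_
          rw [norm_sub_rev]
      _ = 2 * ‖u - s‖ := by ring
  have hIBu : |IB u| ≤ ‖u - s‖ := by
    have h1 : IB u = IB (u - s) := by
      have : IB (u - s) = IB u - IB s := hsetsub _ hBmeas.compl u s
      rw [this, hIBsf i, sub_zero]
    rw [h1]
    calc |IB (u - s)| ≤ ∫ y in Bᶜ, ‖(u - s) y‖ ∂ν := by
          simpa only [hIBdef, Real.norm_eq_abs] using
            norm_integral_le_integral_norm (μ := ν.restrict Bᶜ) (⇑(u - s))
      _ ≤ ∫ y, ‖(u - s) y‖ ∂ν :=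
          setIntegral_le_integral ((L1.integrable_coeFn (u - s)).norm)
            (Eventually.of_forall fun y => norm_nonneg _)
      _ = ‖u - s‖ := (L1.norm_eq_integral_norm _).symm
  calc ‖Tfun u - S u‖ = ‖S (E u - u) + (IB u) • H‖ := by rw [key1]
    _ ≤ ‖S (E u - u)‖ + ‖(IB u) • H‖ := norm_add_le _ _
    _ ≤ ‖E u - u‖ + |IB u| * ‖H‖ := by
        refine add_le_add (hS1 _) ?_
        rw [norm_smul, Real.norm_eq_abs]
    _ ≤ 2 * ‖u - s‖ + ‖u - s‖ * 1 := by
        rw [hHnorm]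
        exact add_le_add hEu (mul_le_mul_of_nonneg_right hIBu zero_le_one)
    _ = 3 * ‖u - s‖ := by ring
    _ ≤ ε := by linarith

end Aux

theorem stochastic_operator_approx_by_integral_operators
    {X Y : Type*} [MeasurableSpace X] [MeasurableSpace Y]
    (μ : Measure X) (ν : Measure Y) [SigmaFinite μ] [SigmaFinite ν]
    (S : Lp ℝ 1 ν →ₗ[ℝ] Lp ℝ 1 μ)
    (hSpos : ∀ u : Lp ℝ 1 ν, 0 ≤ u → 0 ≤ S u)
    (hSint : ∀ u : Lp ℝ 1 ν, ∫ x, S u x ∂μ = ∫ y, u y ∂ν)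
    (V : Submodule ℝ (Lp ℝ 1 ν)) [FiniteDimensional ℝ V] :
    ∃ Sk : ℕ → (Lp ℝ 1 ν →ₗ[ℝ] Lp ℝ 1 μ),
      (∀ m, ∃ K : X → Y → ℝ,
        Measurable (Function.uncurry K) ∧
        (∀ x y, 0 ≤ K x y) ∧
        (∀ᵐ y ∂ν, ∫ x, K x y ∂μ = 1) ∧
        (∀ f : Lp ℝ 1 ν, (Sk m f : X → ℝ) =ᵐ[μ] fun x => ∫ y, K x y * f y ∂ν)) ∧
      (∀ f ∈ V, Filter.Tendsto (fun m => ‖Sk m f - S f‖) Filter.atTop (nhds 0)) := by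
  classical
  by_cases hν : ν = 0
  · subst hν
    refine ⟨fun _ => S, fun m => ⟨fun _ _ => 0, measurable_const, fun _ _ => le_refl 0, ?_, ?_⟩, ?_⟩
    · simp [ae_zero]
    · intro f
      have hf : f = 0 := Lp.ext (by simp [Filter.EventuallyEq, ae_zero])
      rw [hf, map_zero]
      filter_upwards [Lp.coeFn_zero ℝ 1 μ] with x hx
      rw [hx]
      simp
    · intro f hf
      simp only [sub_self, norm_zero]
      exact tendsto_const_nhds
  · -- construct a reference density on X
    have hνu : (0 : ENNReal) < ν Set.univ := Measure.measure_univ_pos.mpr hν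
    obtain ⟨t, htm, -, ht0, htfin⟩ := MeasureTheory.Measure.exists_subset_measure_lt_top MeasurableSet.univ hνu
    set u₀ : Lp ℝ 1 ν := indicatorConstLp 1 htm htfin.ne ((ν t).toReal⁻¹) with hu₀def
    have htR : (ν t).toReal ≠ 0 := ENNReal.toReal_ne_zero.mpr ⟨ht0.ne', htfin.ne⟩
    have hu₀pos : (0 : Lp ℝ 1 ν) ≤ u₀ := by
      rw [← Lp.coeFn_nonneg]
      filter_upwards [indicatorConstLp_coeFn (p := 1) (hs := htm) (hμs := htfin.ne)
        (c := (ν t).toReal⁻¹)] with y hy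
      rw [hy]
      exact Set.indicator_nonneg (fun _ _ => inv_nonneg.mpr ENNReal.toReal_nonneg) y
    have hu₀int : ∫ y, u₀ y ∂ν = 1 := by
      rw [hu₀def, integral_indicatorConstLp htm htfin.ne]
      rw [smul_eq_mul, measureReal_def, mul_inv_cancel₀ htR]
    set H : Lp ℝ 1 μ := S u₀ with hHdef
    have hHpos : (0 : Lp ℝ 1 μ) ≤ H := hSpos _ hu₀pos
    set h : X → ℝ := fun x => max (H x) 0 with hhdef
    have hhm : Measurable h := (Lp.stronglyMeasurable H).measurable.max measurable_const
    have hh0 : ∀ x, 0 ≤ h x := fun x => le_max_right _ _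
    have hHh : ⇑H =ᵐ[μ] h := by
      filter_upwards [(Lp.coeFn_nonneg H).mpr hHpos] with x hx
      simp only [hhdef]
      exact (max_eq_left hx).symm
    have hh1 : ∫ x, h x ∂μ = 1 := by
      rw [← integral_congr_ae hHh]
      rw [hHdef, hSint u₀]
      exact hu₀int
    have hS1 : ∀ w : Lp ℝ 1 ν, ‖S w‖ ≤ ‖w‖ := stochastic_contraction μ ν S hSpos hSint
    -- basis of V
    set b := Module.finBasis ℝ V with hbdef
    set v : Fin (Module.finrank ℝ V) → Lp ℝ 1 ν := fun i => ((b i : V) : Lp ℝ 1 ν) with hvdef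
    have hkey : ∀ m : ℕ, ∃ T : Lp ℝ 1 ν →ₗ[ℝ] Lp ℝ 1 μ,
        (∃ K : X → Y → ℝ,
          Measurable (Function.uncurry K) ∧ (∀ x y, 0 ≤ K x y) ∧
          (∀ᵐ y ∂ν, ∫ x, K x y ∂μ = 1) ∧
          (∀ f : Lp ℝ 1 ν, (T f : X → ℝ) =ᵐ[μ] fun x => ∫ y, K x y * f y ∂ν)) ∧
        ∀ i, ‖T (v i) - S (v i)‖ ≤ 1 / (m + 1) := by
      intro m
      exact stochastic_key μ ν S hS1 hSpos hSint h hhm hh0 hh1 H hHh v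
        (ε := 1 / (m + 1)) (by positivity)
    choose Sk hSkK hSkest using hkey
    refine ⟨Sk, fun m => hSkK m, ?_⟩
    -- the set of functions on which convergence holds is a submodule
    set P : Submodule ℝ (Lp ℝ 1 ν) :=
      { carrier := {f | Tendsto (fun m => ‖Sk m f - S f‖) atTop (nhds 0)}
        add_mem' := by
          intro a bb ha hb
          refine squeeze_zero (fun m => norm_nonneg _) (fun m => ?_) (by simpa using ha.add hb)
          calc ‖Sk m (a + bb) - S (a + bb)‖
              = ‖(Sk m a - S a) + (Sk m bb - S bb)‖ := by
                rw [map_add, map_add]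
                congr 1
                abel
            _ ≤ ‖Sk m a - S a‖ + ‖Sk m bb - S bb‖ := norm_add_le _ _
        zero_mem' := by
          simp only [Set.mem_setOf_eq, map_zero, sub_self, norm_zero]
          exact tendsto_const_nhds
        smul_mem' := by
          intro r a ha
          have heq : ∀ m, ‖Sk m (r • a) - S (r • a)‖ = |r| * ‖Sk m a - S a‖ := by
            intro m
            rw [_root_.map_smul, _root_.map_smul, ← smul_sub, norm_smul, Real.norm_eq_abs]
          show Tendsto (fun m => ‖Sk m (r • a) - S (r • a)‖) atTop (nhds 0)
          simp only [heq]
          simpa using ha.const_mul |r| } with hPdef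
    have hvP : ∀ i, v i ∈ P := by
      intro i
      refine squeeze_zero (fun m => norm_nonneg _) (fun m => hSkest m i) ?_
      exact tendsto_one_div_add_atTop_nhds_zero_nat
    intro f hf
    show f ∈ P
    have hrepr : f = ∑ i, (b.repr ⟨f, hf⟩ i) • v i := by
      have h1 : (⟨f, hf⟩ : V) = ∑ i, b.repr ⟨f, hf⟩ i • b i := (Module.Basis.sum_repr b ⟨f, hf⟩).symm
      calc f = ((⟨f, hf⟩ : V) : Lp ℝ 1 ν) := rfl
        _ = ((∑ i, b.repr ⟨f, hf⟩ i • b i : V) : Lp ℝ 1 ν) := by rw [← h1]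
        _ = ∑ i, (b.repr ⟨f, hf⟩ i) • v i := by
            rw [Submodule.coe_sum]
            exact Finset.sum_congr rfl fun i _ => rfl
    rw [hrepr]
    exact Submodule.sum_mem P fun i _ => Submodule.smul_mem P _ (hvP i)
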